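/- arXiv:2602.09926 — 3 statements merged into one kernel-verified Lean document; each statement's English description precedes it below -/
import Mathlib

section
/- Let X be a finite set with N ≥ 1, and consider the Markov chain on X^N where at each step a coordinate k* is selected (depending on a randomly drawn user location x with full-support distribution Q) and replaced by a new point y drawn from a full-support distribution P on X. Assume k* is the index of a coordinate minimizing d(x, s_k) for a metric d. Then for any two states A, B ∈ X^N, the probability of reaching B from A in exactly N steps is positive. -/
open Finset

variable {X : Type*} [Fintype X] [DecidableEq X] [MetricSpace X]

/-- The set of coordinates of `A` closest to the user location `x`. -/
noncomputable def argminSet {N : ℕ} (A : Fin N → X) (x : X) : Finset (Fin N) :=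
  by classical exact Finset.univ.filter (fun k => ∀ j, dist x (A k) ≤ dist x (A j))

/-- One-step transition probability of the chain: a user location x ~ Q is drawn,
a uniformly chosen closest coordinate is replaced by a new point y ~ P. -/
noncomputable def step {N : ℕ} (Q P : X → ℝ) (A B : Fin N → X) : ℝ :=
  by classical exact
  ∑ x : X, ∑ y : X, Q x * P y *
    (((argminSet A x).filter (fun k => Function.update A k y = B)).card /
      (argminSet A x).card : ℝ)

/-- t-step transition probability. -/
noncomputable def nstep {N : ℕ} (Q P : X → ℝ) :
    ℕ → (Fin N → X) → (Fin N → X) → ℝ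
  | 0, A, B => by classical exact if A = B then 1 else 0
  | t + 1, A, B => ∑ C : Fin N → X, step Q P A C * nstep Q P t C B

lemma step_nonneg {N : ℕ} (Q P : X → ℝ) (hQ : ∀ u, 0 < Q u) (hP : ∀ u, 0 < P u)
    (A B : Fin N → X) : 0 ≤ step Q P A B := by
  unfold step
  refine Finset.sum_nonneg fun x _ => Finset.sum_nonneg fun y _ => ?_
  exact mul_nonneg (mul_nonneg (hQ x).le (hP y).le)
    (div_nonneg (Nat.cast_nonneg _) (Nat.cast_nonneg _))

lemma nstep_nonneg {N : ℕ} (Q P : X → ℝ) (hQ : ∀ u, 0 < Q u) (hP : ∀ u, 0 < P u)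
    (t : ℕ) (A B : Fin N → X) : 0 ≤ nstep Q P t A B := by
  induction t generalizing A with
  | zero => simp only [nstep]; split <;> norm_num
  | succ t ih =>
    simp only [nstep]
    exact Finset.sum_nonneg fun C _ =>
      mul_nonneg (step_nonneg Q P hQ hP A C) (ih C)

lemma mem_argmin_self {N : ℕ} (A : Fin N → X) (k : Fin N) :
    k ∈ argminSet A (A k) := by
  simp only [argminSet, Finset.mem_filter, Finset.mem_univ, true_and]
  intro j
  simp [dist_nonneg]

lemma step_pos {N : ℕ} (Q P : X → ℝ) (hQ : ∀ u, 0 < Q u) (hP : ∀ u, 0 < P u)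
    (A : Fin N → X) (k : Fin N) (y : X) :
    0 < step Q P A (Function.update A k y) := by
  classical
  unfold step
  refine Finset.sum_pos' (fun x _ => Finset.sum_nonneg fun z _ =>
      mul_nonneg (mul_nonneg (hQ x).le (hP z).le)
        (div_nonneg (Nat.cast_nonneg _) (Nat.cast_nonneg _)))
    ⟨A k, Finset.mem_univ _, ?_⟩
  refine Finset.sum_pos' (fun z _ =>
      mul_nonneg (mul_nonneg (hQ _).le (hP z).le)
        (div_nonneg (Nat.cast_nonneg _) (Nat.cast_nonneg _)))
    ⟨y, Finset.mem_univ _, ?_⟩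
  have hk : k ∈ (argminSet A (A k)).filter (fun k' => Function.update A k' y = Function.update A k y) := by
    simp [Finset.mem_filter, mem_argmin_self]
  have h1 : (0:ℝ) < ((argminSet A (A k)).filter
      (fun k' => Function.update A k' y = Function.update A k y)).card := by
    exact_mod_cast Finset.card_pos.mpr ⟨k, hk⟩
  have h2 : (0:ℝ) < (argminSet A (A k)).card := by
    exact_mod_cast Finset.card_pos.mpr ⟨k, mem_argmin_self A k⟩
  exact mul_pos (mul_pos (hQ _) (hP _)) (div_pos h1 h2)

/-- If users' distribution Q and new-server distribution P have full support,
then any state B is reachable from any state A in exactly N steps with positive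
probability. -/
theorem stmt_14 (N : ℕ) (hN : 0 < N) (Q P : X → ℝ)
    (hQ : ∀ u, 0 < Q u) (hP : ∀ u, 0 < P u)
    (hQ1 : ∑ u, Q u = 1) (hP1 : ∑ u, P u = 1)
    (A B : Fin N → X) :
    0 < nstep Q P N A B := by
  classical
  set C : ℕ → (Fin N → X) := fun i k => if (k : ℕ) < i then B k else A k with hC
  have key : ∀ t, t ≤ N → 0 < nstep Q P t (C (N - t)) B := by
    intro t
    induction t with
    | zero =>
      intro _
      have : C N = B := by
        funext k; simp [hC, k.isLt]
      simp only [Nat.sub_zero, this, nstep, if_pos rfl]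
      norm_num
    | succ t ih =>
      intro ht
      have hi : N - (t + 1) < N := by omega
      set i : Fin N := ⟨N - (t + 1), hi⟩
      have hiv : (i : ℕ) = N - (t + 1) := rfl
      have hstepCi : C (N - t) = Function.update (C (N - (t+1))) i (B i) := by
        funext k
        simp only [hC, Function.update]
        by_cases hk : k = i
        · subst hk
          simp only [dif_pos rfl]
          have : (i : ℕ) < N - t := by rw [hiv]; omega
          simp [this]
        · have hki : (k : ℕ) ≠ N - (t+1) := fun h => hk (Fin.ext h)
          have : ((k : ℕ) < N - t) ↔ ((k : ℕ) < N - (t+1)) := by omega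
          simp [hk, this]
      have hpos : 0 < step Q P (C (N - (t+1))) (C (N - t)) := by
        rw [hstepCi]; exact step_pos Q P hQ hP _ i (B i)
      have ih' := ih (by omega)
      show 0 < nstep Q P (t+1) (C (N - (t+1))) B
      simp only [nstep]
      refine Finset.sum_pos' (fun D _ =>
        mul_nonneg (step_nonneg Q P hQ hP _ D) (nstep_nonneg Q P hQ hP t D B))
        ⟨C (N - t), Finset.mem_univ _, mul_pos hpos ih'⟩
  have := key N le_rfl
  simpa [hC] using this
end

section
/- Let X ⊂ ℝ^d be a compact set, let r ∈ X^N have pairwise distinct coordinates, and fix i. Then the map s ↦ μ(V_i(s)) is continuous at r, where μ is the Lebesgue measure restricted to X and V_i(s) = {x ∈ X : ‖x − s_i‖ ≤ ‖x − s_j‖ for all j ≠ i} is the Voronoi cell of the i-th coordinate. -/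
open MeasureTheory Filter Topology
open scoped ENNReal

/-- The Voronoi cell (within X) of the i-th point of the configuration s. -/
def vorCell {d N : ℕ} (X : Set (EuclideanSpace ℝ (Fin d)))
    (s : Fin N → EuclideanSpace ℝ (Fin d)) (i : Fin N) :
    Set (EuclideanSpace ℝ (Fin d)) :=
  {x ∈ X | ∀ j, j ≠ i → ‖x - s i‖ ≤ ‖x - s j‖}

/-- For a compact X ⊂ ℝ^d and a configuration r with pairwise distinct points,
the Lebesgue measure of the i-th Voronoi cell is continuous at r. -/
theorem stmt_16 (d N : ℕ) (X : Set (EuclideanSpace ℝ (Fin d)))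
    (hX : IsCompact X)
    (r : Fin N → EuclideanSpace ℝ (Fin d))
    (hinj : Function.Injective r) (hr : ∀ m, r m ∈ X) (i : Fin N) :
    ContinuousAt (fun s : Fin N → EuclideanSpace ℝ (Fin d) =>
      volume (vorCell X s i)) r := by
  classical
  let E := EuclideanSpace ℝ (Fin d)
  have hXm : MeasurableSet X := hX.isClosed.measurableSet
  have hXfin : volume X ≠ ⊤ := hX.measure_lt_top.ne
  -- slab sets
  set S : Fin N → ℝ → Set E :=
    fun j δ => X ∩ {x | |‖x - r i‖ - ‖x - r j‖| ≤ δ} with hSdef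
  have hSm : ∀ j δ, MeasurableSet (S j δ) := by
    intro j δ
    have hc : Continuous fun x : E => |‖x - r i‖ - ‖x - r j‖| :=
      ((continuous_id.sub continuous_const).norm.sub
        ((continuous_id.sub continuous_const).norm)).abs
    exact hXm.inter ((isClosed_le hc continuous_const).measurableSet)
  have hSsub : ∀ j δ, S j δ ⊆ X := fun j δ => Set.inter_subset_left
  have hSmono : ∀ j, ∀ δ₁ δ₂ : ℝ, δ₁ ≤ δ₂ → S j δ₁ ⊆ S j δ₂ := by
    intro j δ₁ δ₂ h x hx
    exact ⟨hx.1, le_trans hx.2 h⟩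
  -- bisector has measure zero
  have bis : ∀ j, j ≠ i → volume {x : E | ‖x - r i‖ = ‖x - r j‖} = 0 := by
    intro j hj
    have hne : r i ≠ r j := fun h => hj (hinj h).symm
    have hset : {x : E | ‖x - r i‖ = ‖x - r j‖}
        = (AffineSubspace.perpBisector (r i) (r j) : Set E) := by
      ext x
      simp [AffineSubspace.mem_perpBisector_iff_dist_eq, dist_eq_norm]
      rw [dist_eq_norm, dist_eq_norm]
    rw [hset]
    refine Measure.addHaar_affineSubspace _ _ (fun htop => hne ?_)
    have : r i ∈ AffineSubspace.perpBisector (r i) (r j) := by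
      rw [htop]; trivial
    rw [AffineSubspace.mem_perpBisector_iff_dist_eq] at this
    simp only [dist_self] at this
    exact dist_eq_zero.mp this.symm
  -- measures of shrinking slabs tend to zero
  have key : ∀ j, j ≠ i →
      Tendsto (fun n : ℕ => volume (S j (1 / (n + 1)))) atTop (𝓝 0) := by
    intro j hj
    have hanti : Antitone fun n : ℕ => S j (1 / (n + 1)) := by
      intro n m hnm
      refine hSmono j _ _ ?_
      have h1 : (0:ℝ) < n + 1 := by positivity
      have h2 : (n:ℝ) + 1 ≤ m + 1 := by exact_mod_cast Nat.succ_le_succ hnm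
      exact one_div_le_one_div_of_le h1 h2
    have hiter := tendsto_measure_iInter_atTop
      (μ := volume) (s := fun n : ℕ => S j (1 / (n + 1)))
      (fun n => (hSm j _).nullMeasurableSet) hanti
      ⟨0, ((measure_mono (hSsub j _)).trans_lt hX.measure_lt_top).ne⟩
    have hzero : volume (⋂ n : ℕ, S j (1 / (n + 1))) = 0 := by
      refine measure_mono_null ?_ (bis j hj)
      intro x hx
      simp only [Set.mem_iInter] at hx
      have hle : |‖x - r i‖ - ‖x - r j‖| ≤ 0 := by
        refine ge_of_tendsto' tendsto_one_div_add_atTop_nhds_zero_nat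
          (fun n => ?_)
        exact (hx n).2
      have : |‖x - r i‖ - ‖x - r j‖| = 0 := le_antisymm hle (abs_nonneg _)
      have := abs_eq_zero.mp this
      exact sub_eq_zero.mp this
    rw [hzero] at hiter
    exact hiter
  -- finiteness of the value
  have hval : volume (vorCell X r i) ≠ ⊤ :=
    ((measure_mono (fun x hx => hx.1)).trans_lt hX.measure_lt_top).ne
  rw [ContinuousAt, ENNReal.tendsto_nhds hval]
  intro ε hε
  have hεN : (0:ℝ≥0∞) < ε / N := ENNReal.div_pos hε.ne' (ENNReal.natCast_ne_top N)
  -- choose n such that all slabs are small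
  have hev : ∀ᶠ n : ℕ in atTop, ∀ j ∈ Finset.univ.erase i,
      volume (S j (1 / (n + 1))) < ε / N := by
    rw [Filter.eventually_all_finset]
    intro j hj
    exact (key j (Finset.mem_erase.mp hj).1).eventually_lt_const hεN
  obtain ⟨n, hn⟩ := hev.exists
  set δ : ℝ := 1 / (2 * (n + 1)) with hδdef
  have hδpos : 0 < δ := by positivity
  have h2δ : 2 * δ = 1 / (n + 1) := by
    rw [hδdef]; field_simp
  -- eventual set: ball of radius δ
  filter_upwards [Metric.ball_mem_nhds r hδpos] with s hs
  have hdist : ∀ k, ‖s k - r k‖ ≤ δ := by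
    intro k
    have := (dist_le_pi_dist s r k).trans_lt hs
    rw [dist_eq_norm] at this
    exact this.le
  -- symmetric difference inclusion
  have incl : (vorCell X s i \ vorCell X r i) ∪ (vorCell X r i \ vorCell X s i) ⊆
      ⋃ j ∈ Finset.univ.erase i, S j (2 * δ) := by
    rintro x (⟨hxs, hxr⟩ | ⟨hxr, hxs⟩)
    · obtain ⟨hxX, hxall⟩ := hxs
      have : ∃ j, j ≠ i ∧ ‖x - r j‖ < ‖x - r i‖ := by
        by_contra h
        push_neg at h
        exact hxr ⟨hxX, fun j hj => h j hj⟩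
      obtain ⟨j, hj, hlt⟩ := this
      refine Set.mem_biUnion (Finset.mem_erase.mpr ⟨hj, Finset.mem_univ j⟩) ?_
      refine ⟨hxX, ?_⟩
      simp only [Set.mem_setOf_eq]
      rw [abs_le]
      constructor
      · linarith [hlt, hδpos]
      · have h1 : ‖x - r i‖ ≤ ‖x - s i‖ + ‖s i - r i‖ := by
          calc ‖x - r i‖ = ‖(x - s i) + (s i - r i)‖ := by rw [sub_add_sub_cancel]
            _ ≤ ‖x - s i‖ + ‖s i - r i‖ := norm_add_le _ _
        have h2 : ‖x - s j‖ ≤ ‖x - r j‖ + ‖r j - s j‖ := by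
          calc ‖x - s j‖ = ‖(x - r j) + (r j - s j)‖ := by rw [sub_add_sub_cancel]
            _ ≤ ‖x - r j‖ + ‖r j - s j‖ := norm_add_le _ _
        have h3 : ‖x - s i‖ ≤ ‖x - s j‖ := hxall j hj
        have h4 := hdist i
        have h5 : ‖r j - s j‖ ≤ δ := by rw [norm_sub_rev]; exact hdist j
        linarith
    · obtain ⟨hxX, hxall⟩ := hxr
      have : ∃ j, j ≠ i ∧ ‖x - s j‖ < ‖x - s i‖ := by
        by_contra h
        push_neg at h
        exact hxs ⟨hxX, fun j hj => h j hj⟩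
      obtain ⟨j, hj, hlt⟩ := this
      refine Set.mem_biUnion (Finset.mem_erase.mpr ⟨hj, Finset.mem_univ j⟩) ?_
      refine ⟨hxX, ?_⟩
      simp only [Set.mem_setOf_eq]
      rw [abs_le]
      have hij := hxall j hj
      constructor
      · have h1 : ‖x - r j‖ ≤ ‖x - s j‖ + ‖s j - r j‖ := by
          calc ‖x - r j‖ = ‖(x - s j) + (s j - r j)‖ := by rw [sub_add_sub_cancel]
            _ ≤ ‖x - s j‖ + ‖s j - r j‖ := norm_add_le _ _
        have h2 : ‖x - s i‖ ≤ ‖x - r i‖ + ‖r i - s i‖ := by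
          calc ‖x - s i‖ = ‖(x - r i) + (r i - s i)‖ := by rw [sub_add_sub_cancel]
            _ ≤ ‖x - r i‖ + ‖r i - s i‖ := norm_add_le _ _
        have h4 : ‖s j - r j‖ ≤ δ := hdist j
        have h5 : ‖r i - s i‖ ≤ δ := by rw [norm_sub_rev]; exact hdist i
        linarith
      · linarith [hij, hδpos]
  -- measure of the union is small
  have hUsmall : volume (⋃ j ∈ Finset.univ.erase i, S j (2 * δ)) ≤ ε := by
    calc volume (⋃ j ∈ Finset.univ.erase i, S j (2 * δ))
        ≤ ∑ j ∈ Finset.univ.erase i, volume (S j (2 * δ)) :=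
          measure_biUnion_finset_le _ _
      _ ≤ ∑ j ∈ Finset.univ.erase i, ε / N := by
          refine Finset.sum_le_sum fun j hj => ?_
          rw [h2δ]
          exact (hn j hj).le
      _ ≤ ∑ _j ∈ (Finset.univ : Finset (Fin N)), ε / N := by
          exact Finset.sum_le_sum_of_subset (Finset.erase_subset _ _)
      _ = N * (ε / N) := by
          rw [Finset.sum_const, Finset.card_univ, Fintype.card_fin, nsmul_eq_mul]
      _ ≤ ε := ENNReal.mul_div_le
  have hd1 : volume (vorCell X s i \ vorCell X r i) ≤ ε :=
    le_trans (measure_mono fun x hx => incl (Or.inl hx)) hUsmall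
  have hd2 : volume (vorCell X r i \ vorCell X s i) ≤ ε :=
    le_trans (measure_mono fun x hx => incl (Or.inr hx)) hUsmall
  constructor
  · -- lower bound
    rw [tsub_le_iff_right]
    calc volume (vorCell X r i)
        ≤ volume (vorCell X s i ∪ vorCell X r i \ vorCell X s i) :=
          measure_mono fun x hx => by
            by_cases h : x ∈ vorCell X s i
            · exact Or.inl h
            · exact Or.inr ⟨hx, h⟩
      _ ≤ volume (vorCell X s i) + volume (vorCell X r i \ vorCell X s i) :=
          measure_union_le _ _
      _ ≤ volume (vorCell X s i) + ε := by gcongr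
  · calc volume (vorCell X s i)
        ≤ volume (vorCell X r i ∪ vorCell X s i \ vorCell X r i) :=
          measure_mono fun x hx => by
            by_cases h : x ∈ vorCell X r i
            · exact Or.inl h
            · exact Or.inr ⟨hx, h⟩
      _ ≤ volume (vorCell X r i) + volume (vorCell X s i \ vorCell X r i) :=
          measure_union_le _ _
      _ ≤ volume (vorCell X r i) + ε := by gcongr
end

section
/- On the discrete circle with M equally spaced positions and interval lengths ℓ_1, …, ℓ_N (multiples of 1/M summing to 1), the expected nearest-server distance for a user uniform on the M positions equals (1/4) Σ_k ℓ_k² − O/(4M²), where O is the number of intervals ℓ_k whose length ℓ_k·M is odd; in particular the correction term O/(4M²) is at most 1/(4M). -/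
/-- Distance on the circle of circumference 1. -/
noncomputable def circleDist (u v : ℝ) : ℝ := min |u - v| (1 - |u - v|)

lemma sum_min_four (n : ℕ) :
    4 * (∑ j ∈ Finset.range n, min j (n - j)) + n % 2 = n ^ 2 := by
  induction n using Nat.twoStepInduction with
  | zero => simp
  | one => simp
  | more n ih _ =>
    have h1 : ∑ j ∈ Finset.range (n + 2), min j (n + 2 - j)
        = (∑ j ∈ Finset.range n, min j (n - j)) + (n + 1) := by
      rw [Finset.sum_range_succ']
      have : ∀ i ∈ Finset.range (n + 1), min (i + 1) (n + 2 - (i + 1)) = min i (n - i) + 1 := by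
        intro i hi
        have hi' : i ≤ n := by simpa using Nat.lt_succ_iff.mp (Finset.mem_range.mp hi)
        omega
      rw [Finset.sum_congr rfl this, Finset.sum_add_distrib, Finset.sum_range_succ]
      simp [Finset.card_range]
    rw [h1]
    have h2 : (n + 2) ^ 2 = n ^ 2 + (4 * (n + 1) + n % 2 - n % 2) := by ring_nf; omega
    rw [h2, ← ih]
    omega

lemma pointwise {M N : ℕ} (hM : 0 < M) (q L : ℕ → ℕ)
    (hq : ∀ n, q (n + 1) = q n + L n) (hq0 : q 0 = 0) (hqN : q N = M)
    (k j : ℕ) (hk : k < N) (hj : j < L k) (ne : (Finset.univ : Finset (Fin N)).Nonempty) :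
    Finset.univ.inf' ne
      (fun k' : Fin N => circleDist (((q k + j : ℕ) : ℝ) / M) ((q k'.val : ℝ) / M))
    = ((min j (L k - j) : ℕ) : ℝ) / M := by
  have hmono : Monotone q := monotone_nat_of_le_succ (fun n => by rw [hq]; omega)
  have hMR : (0:ℝ) < M := by exact_mod_cast hM
  have hup : q (k + 1) ≤ M := hqN ▸ hmono hk
  have hqk1 : q (k + 1) = q k + L k := hq k
  have haM : q k + j < M := by omega
  have key : ∀ c : ℕ, c ≤ M →
      circleDist (((q k + j : ℕ) : ℝ) / M) ((c : ℝ) / M)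
        = if c ≤ q k + j then min (((q k + j - c : ℕ) : ℝ) / M) (((M - (q k + j - c) : ℕ):ℝ)/M)
          else min (((c - (q k + j) : ℕ) : ℝ) / M) (((M - (c - (q k + j)) : ℕ):ℝ)/M) := by
    intro c hc
    unfold circleDist
    split_ifs with h
    · have h1 : |((q k + j : ℕ) : ℝ) / M - (c : ℝ) / M| = ((q k + j - c : ℕ) : ℝ) / M := by
        rw [div_sub_div_same, abs_div, abs_of_pos hMR,
          abs_of_nonneg (sub_nonneg.mpr (by exact_mod_cast h))]
        rw [Nat.cast_sub h]
      rw [h1]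
      congr 1
      rw [Nat.cast_sub (show q k + j - c ≤ M by omega), Nat.cast_sub h]
      field_simp
    · push_neg at h
      have h1 : |((q k + j : ℕ) : ℝ) / M - (c : ℝ) / M| = ((c - (q k + j) : ℕ) : ℝ) / M := by
        rw [div_sub_div_same, abs_div, abs_of_pos hMR,
          abs_of_nonpos (sub_nonpos.mpr (by exact_mod_cast h.le))]
        rw [Nat.cast_sub h.le]
        ring
      rw [h1]
      congr 1
      rw [Nat.cast_sub (show c - (q k + j) ≤ M by omega), Nat.cast_sub h.le]
      field_simp
  apply le_antisymm
  · -- upper bound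
    rcases le_total j (L k - j) with h | h
    · refine le_trans (Finset.inf'_le _ (Finset.mem_univ (⟨k, hk⟩ : Fin N))) ?_
      simp only
      rw [key (q k) (by omega), if_pos (by omega)]
      refine (min_le_left _ _).trans ?_
      have h2 : q k + j - q k = j := by omega
      rw [h2, Nat.min_eq_left h]
    · by_cases hk1 : k + 1 < N
      · refine le_trans (Finset.inf'_le _ (Finset.mem_univ (⟨k + 1, hk1⟩ : Fin N))) ?_
        simp only
        rw [key (q (k+1)) hup, if_neg (by omega)]
        refine (min_le_left _ _).trans ?_
        have h2 : q (k+1) - (q k + j) = L k - j := by omega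
        rw [h2, Nat.min_eq_right h]
      · refine le_trans (Finset.inf'_le _ (Finset.mem_univ (⟨0, Nat.pos_of_ne_zero (by omega)⟩ : Fin N))) ?_
        simp only [hq0]
        rw [show ((0:ℕ):ℝ) = ((0:ℕ):ℝ) from rfl]
        rw [key 0 (by omega), if_pos (by omega)]
        refine (min_le_right _ _).trans ?_
        have hkN : k + 1 = N := by omega
        have hMe : q k + L k = M := by rw [← hqN, ← hkN, hqk1]
        have h2 : M - (q k + j - 0) = L k - j := by omega
        rw [h2, Nat.min_eq_right h]
  · -- lower bound
    apply Finset.le_inf'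
    intro k' _
    have hbM : q k'.val ≤ M := hqN ▸ hmono k'.isLt.le
    rw [key (q k'.val) hbM]
    split_ifs with hba
    · have hbk : q k'.val ≤ q k := by
        rcases le_or_gt k'.val k with h | h
        · exact hmono h
        · have := hmono (show k + 1 ≤ k'.val from h)
          omega
      exact le_min ((div_le_div_iff_of_pos_right hMR).mpr (Nat.cast_le.mpr (by omega))) ((div_le_div_iff_of_pos_right hMR).mpr (Nat.cast_le.mpr (by omega)))
    · push_neg at hba
      have hbk : q k + L k ≤ q k'.val := by
        rcases le_or_gt k'.val k with h | h
        · have := hmono h; omega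
        · have := hmono (show k + 1 ≤ k'.val from h)
          omega
      exact le_min ((div_le_div_iff_of_pos_right hMR).mpr (Nat.cast_le.mpr (by omega))) ((div_le_div_iff_of_pos_right hMR).mpr (Nat.cast_le.mpr (by omega)))

/-- On the discrete circle with M equally spaced positions, with N servers whose
cyclic gaps are ℓ_k/M (ℓ_k ∈ ℕ, positive, summing to M; server k at position
(Σ_{i<k} ℓ_i)/M), the expected nearest-server distance for a user uniform on the
M positions equals (1/4) Σ (ℓ_k/M)² − O/(4M²), where O is the number of gaps of
odd length; moreover O/(4M²) ≤ 1/(4M). -/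
theorem stmt_18 (M N : ℕ) (hM : 0 < M) (hN : 0 < N)
    (ℓ : Fin N → ℕ) (hpos : ∀ k, 0 < ℓ k) (hsum : ∑ k, ℓ k = M) :
    (1 / (M : ℝ)) * ∑ u ∈ Finset.range M,
        (Finset.univ.inf' (Finset.univ_nonempty_iff.mpr ⟨⟨0, hN⟩⟩)
          fun k => circleDist ((u : ℝ) / M) (((∑ i ∈ Finset.Iio k, ℓ i : ℕ) : ℝ) / M)) =
      (1 / 4) * ∑ k, ((ℓ k : ℝ) / M) ^ 2 -
        ((Finset.univ.filter fun k => Odd (ℓ k)).card : ℝ) / (4 * M ^ 2) ∧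
    ((Finset.univ.filter fun k => Odd (ℓ k)).card : ℝ) / (4 * M ^ 2) ≤
      1 / (4 * M) := by
  classical
  have hMR : (0:ℝ) < M := by exact_mod_cast hM
  set L : ℕ → ℕ := fun i => if h : i < N then ℓ ⟨i, h⟩ else 0 with hLdef
  set q : ℕ → ℕ := fun n => ∑ i ∈ Finset.range n, L i with hqdef
  have hqs : ∀ n, q (n + 1) = q n + L n := fun n => Finset.sum_range_succ L n
  have hq0 : q 0 = 0 := Finset.sum_range_zero L
  have hLk : ∀ k : Fin N, L k.val = ℓ k := fun k => dif_pos k.isLt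
  have hqN : q N = M := by
    show (∑ i ∈ Finset.range N, L i) = M
    rw [← Fin.sum_univ_eq_sum_range L N,
      Finset.sum_congr rfl (fun i _ => hLk i), hsum]
  have hLpos : ∀ n, n < N → 0 < L n := by
    intro n hn
    have := hpos ⟨n, hn⟩
    simpa [hLdef, hn] using this
  have hIio : ∀ k : Fin N, (∑ i ∈ Finset.Iio k, ℓ i) = q k.val := by
    intro k
    rw [Finset.sum_congr rfl (fun i (_ : i ∈ Finset.Iio k) => (hLk i).symm)]
    rw [show (∑ i ∈ Finset.Iio k, L i.val)
        = ∑ j ∈ (Finset.Iio k).map Fin.valEmbedding, L j from (Finset.sum_map (Finset.Iio k) Fin.valEmbedding L).symm]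
    rw [Fin.map_valEmbedding_Iio, Nat.Iio_eq_range]
  have hne : (Finset.univ : Finset (Fin N)).Nonempty :=
    Finset.univ_nonempty_iff.mpr ⟨⟨0, hN⟩⟩
  set G : ℕ → ℝ := fun u => Finset.univ.inf' hne
      (fun k : Fin N => circleDist ((u : ℝ) / M) ((q k.val : ℝ) / M)) with hGdef
  -- split the sum over positions into gaps
  have split : ∀ n, n ≤ N → ∑ u ∈ Finset.range (q n), G u
      = ∑ k ∈ Finset.range n, ∑ j ∈ Finset.range (L k), G (q k + j) := by
    intro n
    induction n with
    | zero => simp [hq0]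
    | succ n ih =>
      intro hn
      rw [hqs n, Finset.sum_range_add, ih (by omega), Finset.sum_range_succ]
  have eval : ∀ k ∈ Finset.range N, ∀ j ∈ Finset.range (L k),
      G (q k + j) = ((min j (L k - j) : ℕ) : ℝ) / M := by
    intro k hk j hj
    exact pointwise hM q L hqs hq0 hqN k j (Finset.mem_range.mp hk)
      (Finset.mem_range.mp hj) hne
  set S : ℕ → ℕ := fun k => ∑ j ∈ Finset.range (L k), min j (L k - j) with hSdef
  have hinner : ∀ k ∈ Finset.range N,
      ∑ j ∈ Finset.range (L k), G (q k + j) = ((S k : ℕ) : ℝ) / M := by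
    intro k hk
    rw [Finset.sum_congr rfl (eval k hk), ← Finset.sum_div, ← Nat.cast_sum]
  have hS : ∀ k : ℕ, ((S k : ℕ) : ℝ) = (((L k : ℝ)) ^ 2 - ((L k % 2 : ℕ) : ℝ)) / 4 := by
    intro k
    have h4 := sum_min_four (L k)
    have h5 : 4 * ((S k : ℕ) : ℝ) + ((L k % 2 : ℕ) : ℝ) = ((L k : ℕ) : ℝ) ^ 2 := by
      exact_mod_cast h4
    linarith
  have hA : ∑ k ∈ Finset.range N, ((L k : ℝ)) ^ 2 = ∑ k : Fin N, ((ℓ k : ℝ)) ^ 2 := by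
    rw [← Fin.sum_univ_eq_sum_range (fun i => ((L i : ℝ)) ^ 2) N]
    exact Finset.sum_congr rfl (fun k _ => by rw [hLk])
  have hO : ∑ k ∈ Finset.range N, ((L k % 2 : ℕ) : ℝ)
      = ((Finset.univ.filter fun k => Odd (ℓ k)).card : ℝ) := by
    rw [← Fin.sum_univ_eq_sum_range (fun i => ((L i % 2 : ℕ) : ℝ)) N]
    rw [Finset.sum_congr rfl (fun k (_ : k ∈ Finset.univ) => by
      rw [hLk]
      rcases Nat.even_or_odd (ℓ k) with h | h
      · simp [Nat.even_iff.mp h, h, Nat.odd_iff]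
      · simp [Nat.odd_iff.mp h, h] :
        ∀ k ∈ Finset.univ, ((L k.val % 2 : ℕ) : ℝ) = if Odd (ℓ k) then (1:ℝ) else 0)]
    rw [Finset.sum_boole]
  have hNM : N ≤ M := by
    calc N = ∑ _k : Fin N, 1 := by simp
    _ ≤ ∑ k, ℓ k := Finset.sum_le_sum (fun k _ => hpos k)
    _ = M := hsum
  have hcard : ((Finset.univ.filter fun k => Odd (ℓ k)).card : ℝ) ≤ (M : ℝ) := by
    have : (Finset.univ.filter fun k => Odd (ℓ k)).card ≤ M :=
      le_trans (Finset.card_filter_le _ _) (by simpa using hNM)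
    exact_mod_cast this
  constructor
  · -- main identity
    have hgoalsum : ∑ u ∈ Finset.range M,
        (Finset.univ.inf' (Finset.univ_nonempty_iff.mpr ⟨⟨0, hN⟩⟩)
          fun k => circleDist ((u : ℝ) / M) (((∑ i ∈ Finset.Iio k, ℓ i : ℕ) : ℝ) / M))
        = ∑ u ∈ Finset.range M, G u := by
      refine Finset.sum_congr rfl (fun u _ => ?_)
      refine Finset.inf'_congr _ rfl (fun k _ => ?_)
      rw [hIio k]
    rw [hgoalsum, ← hqN, split N le_rfl, Finset.sum_congr rfl hinner,
      Finset.sum_congr rfl (fun k _ => by rw [hS k]), hqN]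
    have hstep : ∑ k ∈ Finset.range N, (((L k : ℝ)) ^ 2 - ((L k % 2 : ℕ) : ℝ)) / 4 / (M : ℝ)
        = ((∑ k : Fin N, ((ℓ k : ℝ)) ^ 2)
            - ((Finset.univ.filter fun k => Odd (ℓ k)).card : ℝ)) / (4 * M) := by
      rw [Finset.sum_congr rfl (fun k _ => div_div _ 4 (M : ℝ)), ← Finset.sum_div,
        Finset.sum_sub_distrib, hA, hO]
    rw [hstep]
    have hsq : ∑ k : Fin N, ((ℓ k : ℝ) / M) ^ 2 = (∑ k : Fin N, ((ℓ k : ℝ)) ^ 2) / M ^ 2 := by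
      rw [Finset.sum_div]
      exact Finset.sum_congr rfl (fun k _ => by rw [div_pow])
    rw [hsq, sub_div]
    ring
  · -- bound
    rw [show (1:ℝ) / (4 * M) = (M : ℝ) / (4 * M ^ 2) by field_simp]
    have h4M : (0:ℝ) < 4 * (M : ℝ) ^ 2 := by positivity
    exact (div_le_div_iff_of_pos_right h4M).mpr hcard
end
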